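/- Let S_1 and S_2 be nonempty convex subsets of real vector spaces, let c ∈ ℝ, and let u_1 : S_1 × S_2 → ℝ be such that x_1 ↦ u_1(x_1, x_2) is concave on S_1 for every fixed x_2 ∈ S_2, and x_2 ↦ u_1(x_1, x_2) is convex on S_2 for every fixed x_1 ∈ S_1. Let u_2 = c − u_1, and suppose that for every (x_1, x_2) ∈ S_1 × S_2 both sup_{x_1' ∈ S_1} u_1(x_1', x_2) and inf_{x_2' ∈ S_2} u_1(x_1, x_2') are finite. Then the exploitability Φ(x_1, x_2) = ( sup_{x_1' ∈ S_1} u_1(x_1', x_2) − u_1(x_1, x_2) ) + ( sup_{x_2' ∈ S_2} u_2(x_1, x_2') − u_2(x_1, x_2) ) is a convex function on S_1 × S_2. -/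

import Mathlib

open Set

/-- A two-player constant-sum concave-convex game has convex
exploitability. -/
theorem constant_sum_concave_convex_game_convex_exploitability
    {E₁ E₂ : Type*} [AddCommGroup E₁] [Module ℝ E₁] [AddCommGroup E₂] [Module ℝ E₂]
    (S₁ : Set E₁) (S₂ : Set E₂)
    (hS₁ne : S₁.Nonempty) (hS₂ne : S₂.Nonempty)
    (hS₁conv : Convex ℝ S₁) (hS₂conv : Convex ℝ S₂)
    (c : ℝ) (u₁ : E₁ → E₂ → ℝ) (u₂ : E₁ → E₂ → ℝ)
    (hu₂ : ∀ x₁ x₂, u₂ x₁ x₂ = c - u₁ x₁ x₂)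
    (hconc : ∀ x₂ ∈ S₂, ConcaveOn ℝ S₁ (fun x₁ => u₁ x₁ x₂))
    (hconv : ∀ x₁ ∈ S₁, ConvexOn ℝ S₂ (fun x₂ => u₁ x₁ x₂))
    (hbdd₁ : ∀ x₂ ∈ S₂, BddAbove ((fun x₁' => u₁ x₁' x₂) '' S₁))
    (hbdd₂ : ∀ x₁ ∈ S₁, BddBelow ((fun x₂' => u₁ x₁ x₂') '' S₂)) :
    ConvexOn ℝ (S₁ ×ˢ S₂)
      (fun p : E₁ × E₂ =>
        (sSup ((fun x₁' => u₁ x₁' p.2) '' S₁) - u₁ p.1 p.2)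
        + (sSup ((fun x₂' => u₂ p.1 x₂') '' S₂) - u₂ p.1 p.2)) := by
  have hbdd₂' : ∀ x₁ ∈ S₁, BddAbove ((fun x₂' => c - u₁ x₁ x₂') '' S₂) := by
    intro x₁ hx₁
    obtain ⟨m, hm⟩ := hbdd₂ x₁ hx₁
    refine ⟨c - m, ?_⟩
    rintro _ ⟨x₂', hx₂', rfl⟩
    have := hm (Set.mem_image_of_mem _ hx₂')
    simpa using sub_le_sub_left this c
  have key : (fun p : E₁ × E₂ =>
        (sSup ((fun x₁' => u₁ x₁' p.2) '' S₁) - u₁ p.1 p.2)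
        + (sSup ((fun x₂' => u₂ p.1 x₂') '' S₂) - u₂ p.1 p.2))
      = fun p : E₁ × E₂ =>
        (sSup ((fun x₁' => u₁ x₁' p.2) '' S₁)
        + sSup ((fun x₂' => c - u₁ p.1 x₂') '' S₂)) - c := by
    funext p
    have h : (fun x₂' => u₂ p.1 x₂') = fun x₂' => c - u₁ p.1 x₂' := funext (hu₂ p.1)
    rw [h, hu₂]; ring
  rw [key]
  have hA : ConvexOn ℝ (S₁ ×ˢ S₂)
      (fun p : E₁ × E₂ => sSup ((fun x₁' => u₁ x₁' p.2) '' S₁)) := by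
    refine ⟨hS₁conv.prod hS₂conv, ?_⟩
    intro p hp q hq a b ha hb hab
    refine csSup_le (hS₁ne.image _) ?_
    rintro _ ⟨x₁', hx₁', rfl⟩
    have h1 : u₁ x₁' (a • p + b • q).2 ≤ a * u₁ x₁' p.2 + b * u₁ x₁' q.2 := by
      have := (hconv x₁' hx₁').2 hp.2 hq.2 ha hb hab
      simpa using this
    have h2 : u₁ x₁' p.2 ≤ sSup ((fun x₁' => u₁ x₁' p.2) '' S₁) :=
      le_csSup (hbdd₁ p.2 hp.2) (Set.mem_image_of_mem _ hx₁')
    have h3 : u₁ x₁' q.2 ≤ sSup ((fun x₁' => u₁ x₁' q.2) '' S₁) :=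
      le_csSup (hbdd₁ q.2 hq.2) (Set.mem_image_of_mem _ hx₁')
    have := add_le_add (mul_le_mul_of_nonneg_left h2 ha)
      (mul_le_mul_of_nonneg_left h3 hb)
    simp only [smul_eq_mul]
    linarith
  have hB : ConvexOn ℝ (S₁ ×ˢ S₂)
      (fun p : E₁ × E₂ => sSup ((fun x₂' => c - u₁ p.1 x₂') '' S₂)) := by
    refine ⟨hS₁conv.prod hS₂conv, ?_⟩
    intro p hp q hq a b ha hb hab
    refine csSup_le (hS₂ne.image _) ?_
    rintro _ ⟨x₂', hx₂', rfl⟩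
    have h1 : a * u₁ p.1 x₂' + b * u₁ q.1 x₂' ≤ u₁ (a • p + b • q).1 x₂' := by
      have := (hconc x₂' hx₂').2 hp.1 hq.1 ha hb hab
      simpa using this
    have h2 : c - u₁ p.1 x₂' ≤ sSup ((fun x₂' => c - u₁ p.1 x₂') '' S₂) :=
      le_csSup (hbdd₂' p.1 hp.1) (Set.mem_image_of_mem _ hx₂')
    have h3 : c - u₁ q.1 x₂' ≤ sSup ((fun x₂' => c - u₁ q.1 x₂') '' S₂) :=
      le_csSup (hbdd₂' q.1 hq.1) (Set.mem_image_of_mem _ hx₂')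
    have := add_le_add (mul_le_mul_of_nonneg_left h2 ha)
      (mul_le_mul_of_nonneg_left h3 hb)
    have hc : a * c + b * c = c := by rw [← add_mul, hab, one_mul]
    simp only [smul_eq_mul]
    nlinarith
  simpa [sub_eq_add_neg, Pi.add_def] using (hA.add hB).add_const (-c)
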